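/- There exists a constant C₁ > 1 with the following property. For every commutative unital normed ℝ-algebra A with submultiplicative norm, every ℝ-linear derivation D : A → A, every integer N ≥ 3, every real L ≥ 1, and all elements u₁, u₂, u₃ ∈ A satisfying ‖Dⁿ uᵢ‖ ≤ L^{n−1}·(n−2)! for all integers 2 ≤ n ≤ N and all i ∈ {1,2,3}, one has ‖Dⁿ(u₁u₂u₃)‖ ≤ C₁·(1 + Σ_{i=1}^{3} Σ_{l=0}^{1} ‖D^l uᵢ‖)^{6}·L^{n−1}·(n−2)! for all integers 2 ≤ n ≤ N. -/

import Mathlib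

open Finset Nat

lemma leibniz_iter {A : Type} [NormedCommRing A] [NormedAlgebra ℝ A] (D : A →ₗ[ℝ] A)
    (hD : ∀ x y : A, D (x * y) = x * D y + D x * y) (x y : A) :
    ∀ n : ℕ, (⇑D)^[n] (x * y) =
      ∑ j ∈ Finset.range (n + 1), n.choose j • ((⇑D)^[j] x * (⇑D)^[n - j] y) := by
  intro n
  induction n with
  | zero => simp
  | succ n ih =>
    have step : ∀ j ∈ Finset.range (n+1),
        D (n.choose j • ((⇑D)^[j] x * (⇑D)^[n-j] y)) =
          n.choose j • ((⇑D)^[j] x * (⇑D)^[n-j+1] y)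
          + n.choose j • ((⇑D)^[j+1] x * (⇑D)^[n-j] y) := by
      intro j _
      rw [map_nsmul, hD, smul_add, Function.iterate_succ_apply', Function.iterate_succ_apply']
    have h1 : (⇑D)^[n+1] (x*y)
        = ∑ j ∈ Finset.range (n+1), (n.choose j • ((⇑D)^[j] x * (⇑D)^[n-j+1] y)
            + n.choose j • ((⇑D)^[j+1] x * (⇑D)^[n-j] y)) := by
      rw [Function.iterate_succ_apply', ih, map_sum]
      exact Finset.sum_congr rfl step
    rw [h1, Finset.sum_add_distrib]
    -- S1 + S2 = T
    have hS1 : ∑ j ∈ Finset.range (n+1), n.choose j • ((⇑D)^[j] x * (⇑D)^[n-j+1] y)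
        = ∑ j ∈ Finset.range n, n.choose (j+1) • ((⇑D)^[j+1] x * (⇑D)^[n-j] y)
          + (1:ℕ) • (x * (⇑D)^[n+1] y) := by
      rw [Finset.sum_range_succ']
      simp only [Nat.choose_zero_right, Function.iterate_zero_apply, Nat.sub_zero]
      congr 1
      apply Finset.sum_congr rfl
      intro j hj
      have : n - (j+1) + 1 = n - j := by
        have := Finset.mem_range.mp hj; omega
      rw [this]
    have hS2' : ∑ j ∈ Finset.range (n+1), n.choose (j+1) • ((⇑D)^[j+1] x * (⇑D)^[n-j] y)
        = ∑ j ∈ Finset.range n, n.choose (j+1) • ((⇑D)^[j+1] x * (⇑D)^[n-j] y) := by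
      rw [Finset.sum_range_succ, Nat.choose_succ_self, zero_smul, add_zero]
    have hT : ∑ j ∈ Finset.range (n+2), (n+1).choose j • ((⇑D)^[j] x * (⇑D)^[n+1-j] y)
        = ∑ j ∈ Finset.range (n+1), ((n.choose j) • ((⇑D)^[j+1] x * (⇑D)^[n-j] y)
            + (n.choose (j+1)) • ((⇑D)^[j+1] x * (⇑D)^[n-j] y))
          + (1:ℕ) • (x * (⇑D)^[n+1] y) := by
      rw [Finset.sum_range_succ']
      simp only [Nat.choose_zero_right, Function.iterate_zero_apply, Nat.sub_zero]
      congr 1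
      apply Finset.sum_congr rfl
      intro j hj
      have h2 : n + 1 - (j+1) = n - j := by omega
      rw [h2, Nat.choose_succ_succ, add_nsmul]
    rw [hT, Finset.sum_add_distrib, hS1, hS2']
    ring

open Finset Nat

-- telescoping sum
lemma telescope (k : ℕ) : ∑ j ∈ Finset.range k, (1:ℝ)/((j+1)*(j+2)) = 1 - 1/(k+1) := by
  induction k with
  | zero => simp
  | succ k ih =>
    rw [Finset.sum_range_succ, ih]
    have h1 : ((k:ℝ)+1) ≠ 0 := by positivity
    have h2 : ((k:ℝ)+2) ≠ 0 := by positivity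
    have : ((k:ℝ)+1+1) = (k:ℝ)+2 := by ring
    push_cast
    field_simp
    ring

-- middle term bound
lemma mid_bound (a b : ℕ) :
    (((a+b+4).choose (a+2) : ℝ)) * a.factorial * b.factorial ≤
      8 * ((a+b+2).factorial) * (1/((a+2)*(a+1)) + 1/((b+2)*(b+1))) := by
  have hid : (a+b+4).choose (a+2) * (a+2).factorial * (b+2).factorial = (a+b+4).factorial := by
    have h := Nat.choose_mul_factorial_mul_factorial
      (show a+2 ≤ a+b+4 by omega) (n := a+b+4)
    have : a + b + 4 - (a + 2) = b + 2 := by omega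
    rwa [this] at h
  have hfa : ((a+2).factorial : ℝ) = (a+2)*(a+1)*a.factorial := by
    rw [Nat.factorial_succ, Nat.factorial_succ]; push_cast; ring
  have hfb : ((b+2).factorial : ℝ) = (b+2)*(b+1)*b.factorial := by
    rw [Nat.factorial_succ, Nat.factorial_succ]; push_cast; ring
  have hfn : ((a+b+4).factorial : ℝ) = (a+b+4)*(a+b+3)*((a+b+2).factorial) := by
    have e1 : a+b+4 = (a+b+3)+1 := by omega
    have e2 : a+b+3 = (a+b+2)+1 := by omega
    rw [e1, Nat.factorial_succ, e2, Nat.factorial_succ]; push_cast; ring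
  have hidR : ((a+b+4).choose (a+2) : ℝ) * ((a+2)*(a+1)*a.factorial) * ((b+2)*(b+1)*b.factorial)
      = (a+b+4)*(a+b+3)*((a+b+2).factorial) := by
    rw [← hfa, ← hfb, ← hfn]
    exact_mod_cast congrArg (Nat.cast : ℕ → ℝ) hid
  have hP : (0:ℝ) < ((a:ℝ)+2)*((a:ℝ)+1) := by positivity
  have hQ : (0:ℝ) < ((b:ℝ)+2)*((b:ℝ)+1) := by positivity
  have hkey : ((a:ℝ)+b+4)*((a:ℝ)+b+3) ≤
      8 * (((a:ℝ)+2)*((a:ℝ)+1) + ((b:ℝ)+2)*((b:ℝ)+1)) := by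
    nlinarith [sq_nonneg ((a:ℝ) - b), sq_nonneg ((a:ℝ)+b)]
  have hfac : (0:ℝ) ≤ ((a+b+2).factorial : ℝ) := by positivity
  rw [div_add_div _ _ (ne_of_gt hP) (ne_of_gt hQ)]
  have hden : (0:ℝ) < ((a:ℝ)+2)*((a:ℝ)+1) * (((b:ℝ)+2)*((b:ℝ)+1)) := by positivity
  rw [← mul_div_assoc, le_div_iff₀ hden]
  nlinarith [mul_le_mul_of_nonneg_right hkey hfac, hidR]


noncomputable def g (k : ℕ) : ℝ := 1/(((k:ℝ)+2)*((k:ℝ)+1))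

lemma sum_g_le (k : ℕ) : ∑ j ∈ Finset.range k, g j ≤ 1 := by
  have h : ∑ j ∈ Finset.range k, g j = ∑ j ∈ Finset.range k, (1:ℝ)/((j+1)*(j+2)) :=
    Finset.sum_congr rfl (fun j _ => by rw [g, mul_comm])
  rw [h, telescope]
  have : (0:ℝ) < (k:ℝ)+1 := by positivity
  have : (0:ℝ) ≤ 1/((k:ℝ)+1) := by positivity
  linarith

lemma key (n : ℕ) :
    ∑ j ∈ Finset.range (n+1), ((n.choose j : ℝ) * ((j-2).factorial) * (((n-j)-2).factorial))
      ≤ 24 * ((n-2).factorial) := by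
  match n with
  | 0 => norm_num
  | 1 => norm_num [Finset.sum_range_succ]
  | 2 => norm_num [Finset.sum_range_succ]
  | 3 => norm_num [Finset.sum_range_succ, Nat.choose]
  | (m+4) =>
    set t : ℕ → ℝ := fun j => (((m+4).choose j : ℝ) * ((j-2).factorial) * (((m+4-j)-2).factorial))
      with ht
    set F : ℝ := ((m+2).factorial : ℝ) with hF
    have hFpos : (0:ℝ) < F := by rw [hF]; positivity
    have hsplit : ∑ j ∈ Finset.range (m+5), t j
        = (∑ j ∈ Finset.range (m+1), t (j+2)) + t 0 + t 1 + t (m+3) + t (m+4) := by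
      rw [show m+5 = (m+4)+1 from rfl, Finset.sum_range_succ, show m+4 = (m+3)+1 from rfl,
        Finset.sum_range_succ, Finset.sum_range_succ', Finset.sum_range_succ']
      simp only [show ∀ i : ℕ, i+1+1 = i+2 from fun _ => rfl]
      ring
    have hmid : ∀ j ∈ Finset.range (m+1), t (j+2) ≤ 8 * F * (g j + g (m-j)) := by
      intro j hj
      have hjm : j ≤ m := by have := Finset.mem_range.mp hj; omega
      have e1 : m + 4 - (j+2) - 2 = m - j := by omega
      have e2 : j + 2 - 2 = j := by omega
      have hmb := mid_bound j (m-j)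
      rw [show j + (m-j) + 4 = m + 4 by omega, show j + (m-j) + 2 = m + 2 by omega] at hmb
      rw [ht]
      simp only [e1, e2]
      rw [g, g, hF]
      exact hmb
    have hmidsum : ∑ j ∈ Finset.range (m+1), t (j+2) ≤ 16 * F := by
      have h1 : ∑ j ∈ Finset.range (m+1), t (j+2)
          ≤ ∑ j ∈ Finset.range (m+1), 8 * F * (g j + g (m-j)) :=
        Finset.sum_le_sum hmid
      have hrefl : ∑ j ∈ Finset.range (m+1), g (m - j) = ∑ j ∈ Finset.range (m+1), g j := by
        simpa using Finset.sum_range_reflect g (m+1)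
      have h2 : ∑ j ∈ Finset.range (m+1), 8 * F * (g j + g (m-j))
          = 8 * F * (∑ j ∈ Finset.range (m+1), g j + ∑ j ∈ Finset.range (m+1), g (m-j)) := by
        rw [← Finset.mul_sum, Finset.sum_add_distrib]
      have h3 := sum_g_le (m+1)
      rw [hrefl] at h2
      calc ∑ j ∈ Finset.range (m+1), t (j+2)
          ≤ 8 * F * (∑ j ∈ Finset.range (m+1), g j + ∑ j ∈ Finset.range (m+1), g j) := by
            rw [← h2]; exact h1
        _ ≤ 16 * F := by nlinarith
    have ht0 : t 0 = F := by
      rw [ht, hF]; norm_num [show m+4-2 = m+2 by omega]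
    have ht4 : t (m+4) = F := by
      rw [ht, hF]; norm_num [show m+4-2 = m+2 by omega]
    have hfact2 : F = ((m:ℝ)+2) * ((m+1).factorial : ℝ) := by
      rw [hF, Nat.factorial_succ]; push_cast; ring
    have ht1 : t 1 ≤ 3 * F := by
      rw [ht]
      simp only [Nat.choose_one_right]
      norm_num [show m+4-1-2 = m+1 by omega, show m+3-2 = m+1 by omega]
      rw [hfact2]
      have h0 : (0:ℝ) ≤ ((m+1).factorial : ℝ) := by positivity
      nlinarith
    have ht3 : t (m+3) ≤ 3 * F := by
      have hc : (m+4).choose (m+3) = m+4 := by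
        have h := Nat.choose_symm (show 1 ≤ m+4 by omega)
        simpa using h
      rw [ht]
      simp only []
      rw [hc]
      norm_num [show m+3-2 = m+1 by omega, show m+4-(m+3)-2 = 0 by omega]
      rw [hfact2]
      have h0 : (0:ℝ) ≤ ((m+1).factorial : ℝ) := by positivity
      nlinarith
    rw [show m+4+1 = m+5 from rfl, hsplit, show m+4-2 = m+2 by omega, ← hF]
    linarith

lemma norm_iter_le {A : Type} [NormedCommRing A] [NormedAlgebra ℝ A] (D : A →ₗ[ℝ] A)
    (hD : ∀ x y : A, D (x * y) = x * D y + D x * y) (x y : A) (Kx Ky L : ℝ)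
    (hKx : 0 ≤ Kx) (hKy : 0 ≤ Ky) (hL : 1 ≤ L) (N : ℕ)
    (hx : ∀ k : ℕ, k ≤ N → ‖(⇑D)^[k] x‖ ≤ Kx * L^(k-1) * ((k-2).factorial : ℝ))
    (hy : ∀ k : ℕ, k ≤ N → ‖(⇑D)^[k] y‖ ≤ Ky * L^(k-1) * ((k-2).factorial : ℝ)) :
    ∀ k : ℕ, k ≤ N → ‖(⇑D)^[k] (x * y)‖ ≤ 24 * (Kx * Ky) * L^(k-1) * ((k-2).factorial : ℝ) := by
  intro k hk
  have hL0 : (0:ℝ) < L := lt_of_lt_of_le one_pos hL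
  have hterm : ∀ j ∈ Finset.range (k+1),
      ‖(k.choose j) • ((⇑D)^[j] x * (⇑D)^[k-j] y)‖ ≤
        (Kx * Ky * L^(k-1)) *
          ((k.choose j : ℝ) * ((j-2).factorial) * (((k-j)-2).factorial)) := by
    intro j hj
    have hjk : j ≤ k := by have := Finset.mem_range.mp hj; omega
    have hxj := hx j (hjk.trans hk)
    have hyj := hy (k-j) ((Nat.sub_le k j).trans hk)
    have h1 : ‖(k.choose j) • ((⇑D)^[j] x * (⇑D)^[k-j] y)‖ ≤
        (k.choose j : ℝ) * (‖(⇑D)^[j] x‖ * ‖(⇑D)^[k-j] y‖) := by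
      refine norm_nsmul_le.trans ?_
      exact mul_le_mul_of_nonneg_left (norm_mul_le _ _) (by positivity)
    have h2 : (k.choose j : ℝ) * (‖(⇑D)^[j] x‖ * ‖(⇑D)^[k-j] y‖) ≤
        (k.choose j : ℝ) * ((Kx * L^(j-1) * ((j-2).factorial : ℝ)) *
          (Ky * L^((k-j)-1) * (((k-j)-2).factorial : ℝ))) := by
      gcongr
      all_goals first
        | exact (norm_nonneg _).trans hxj
        | exact norm_nonneg _
        | exact hxj
        | exact hyj
        | positivity
    have hpow : L^(j-1) * L^((k-j)-1) ≤ L^(k-1) := by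
      rw [← pow_add]
      exact pow_le_pow_right₀ hL (by omega)
    calc ‖(k.choose j) • ((⇑D)^[j] x * (⇑D)^[k-j] y)‖
        ≤ (k.choose j : ℝ) * ((Kx * L^(j-1) * ((j-2).factorial : ℝ)) *
            (Ky * L^((k-j)-1) * (((k-j)-2).factorial : ℝ))) := h1.trans h2
      _ = (Kx * Ky * (L^(j-1) * L^((k-j)-1))) *
            ((k.choose j : ℝ) * ((j-2).factorial) * (((k-j)-2).factorial)) := by ring
      _ ≤ (Kx * Ky * L^(k-1)) *
            ((k.choose j : ℝ) * ((j-2).factorial) * (((k-j)-2).factorial)) := by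
          gcongr
          all_goals first
            | exact mul_nonneg hKx hKy
            | exact hpow
            | positivity
  calc ‖(⇑D)^[k] (x * y)‖
      = ‖∑ j ∈ Finset.range (k+1), (k.choose j) • ((⇑D)^[j] x * (⇑D)^[k-j] y)‖ := by
        rw [leibniz_iter D hD x y k]
    _ ≤ ∑ j ∈ Finset.range (k+1), ‖(k.choose j) • ((⇑D)^[j] x * (⇑D)^[k-j] y)‖ :=
        norm_sum_le _ _
    _ ≤ ∑ j ∈ Finset.range (k+1), (Kx * Ky * L^(k-1)) *
          ((k.choose j : ℝ) * ((j-2).factorial) * (((k-j)-2).factorial)) :=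
        Finset.sum_le_sum hterm
    _ = (Kx * Ky * L^(k-1)) * ∑ j ∈ Finset.range (k+1),
          ((k.choose j : ℝ) * ((j-2).factorial) * (((k-j)-2).factorial)) :=
        (Finset.mul_sum _ _ _).symm
    _ ≤ (Kx * Ky * L^(k-1)) * (24 * ((k-2).factorial : ℝ)) := by
        refine mul_le_mul_of_nonneg_left (key k) ?_
        exact mul_nonneg (mul_nonneg hKx hKy) (pow_nonneg hL0.le _)
    _ = 24 * (Kx * Ky) * L^(k-1) * ((k-2).factorial : ℝ) := by ring

/-- Lemma 2.2 (ii). There is a universal constant `C₁ > 1` such that for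
any commutative unital normed `ℝ`-algebra `A` (with submultiplicative norm), any
`ℝ`-linear derivation `D : A → A`, any `N ≥ 3`, `L ≥ 1`, and `u₁, u₂, u₃ ∈ A` with
`‖Dⁿ uᵢ‖ ≤ L^(n-1) (n-2)!` for `2 ≤ n ≤ N`, one has
`‖Dⁿ(u₁u₂u₃)‖ ≤ C₁ (1 + Σᵢ Σ_{l≤1} ‖D^l uᵢ‖)^6 L^(n-1) (n-2)!` for `2 ≤ n ≤ N`. -/
theorem derivation_product_estimate_three :
    ∃ C₁ : ℝ, 1 < C₁ ∧
      ∀ (A : Type) [NormedCommRing A] [NormedAlgebra ℝ A] (D : A →ₗ[ℝ] A),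
        (∀ x y : A, D (x * y) = x * D y + D x * y) →
        ∀ (N : ℕ), 3 ≤ N → ∀ (L : ℝ), 1 ≤ L → ∀ u : Fin 3 → A,
          (∀ i : Fin 3, ∀ n : ℕ, 2 ≤ n → n ≤ N →
            ‖(⇑D)^[n] (u i)‖ ≤ L ^ (n - 1) * (n - 2).factorial) →
          ∀ n : ℕ, 2 ≤ n → n ≤ N →
            ‖(⇑D)^[n] (∏ i, u i)‖ ≤
              C₁ * (1 + ∑ i : Fin 3, ∑ l ∈ Finset.range 2, ‖(⇑D)^[l] (u i)‖) ^ 6 *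
                L ^ (n - 1) * (n - 2).factorial := by
  refine ⟨576, by norm_num, ?_⟩
  intro A _ _ D hD N hN L hL u hu n hn2 hnN
  have hL0 : (0:ℝ) < L := lt_of_lt_of_le one_pos hL
  set M : ℝ := 1 + ∑ i : Fin 3, ∑ l ∈ Finset.range 2, ‖(⇑D)^[l] (u i)‖ with hM
  have hsumnn : ∀ i : Fin 3, 0 ≤ ∑ l ∈ Finset.range 2, ‖(⇑D)^[l] (u i)‖ :=
    fun i => Finset.sum_nonneg fun l _ => norm_nonneg _
  have hM1 : 1 ≤ M := by
    have : 0 ≤ ∑ i : Fin 3, ∑ l ∈ Finset.range 2, ‖(⇑D)^[l] (u i)‖ :=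
      Finset.sum_nonneg fun i _ => hsumnn i
    rw [hM]; linarith
  have hM0 : 0 ≤ M := by linarith
  have hsmall : ∀ i : Fin 3, ∀ l ∈ Finset.range 2, ‖(⇑D)^[l] (u i)‖ ≤ M := by
    intro i l hl
    have h1 : ∑ l ∈ Finset.range 2, ‖(⇑D)^[l] (u i)‖ ≤
        ∑ i : Fin 3, ∑ l ∈ Finset.range 2, ‖(⇑D)^[l] (u i)‖ :=
      Finset.single_le_sum (fun i _ => hsumnn i) (Finset.mem_univ i)
    have h2 : ‖(⇑D)^[l] (u i)‖ ≤ ∑ l ∈ Finset.range 2, ‖(⇑D)^[l] (u i)‖ :=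
      Finset.single_le_sum (f := fun j => ‖(⇑D)^[j] (u i)‖) (fun _ _ => norm_nonneg _) hl
    rw [hM]; linarith
  have hMi : ∀ i : Fin 3, ∀ k : ℕ, k ≤ N →
      ‖(⇑D)^[k] (u i)‖ ≤ M * L^(k-1) * ((k-2).factorial : ℝ) := by
    intro i k hk
    match k with
    | 0 => simpa using hsmall i 0 (by norm_num)
    | 1 => simpa using hsmall i 1 (by norm_num)
    | (k+2) =>
      have h := hu i (k+2) (by omega) hk
      calc ‖(⇑D)^[k+2] (u i)‖ ≤ L ^ (k+2-1) * ((k+2-2).factorial : ℝ) := h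
        _ = 1 * (L ^ (k+2-1) * ((k+2-2).factorial : ℝ)) := by ring
        _ ≤ M * (L ^ (k+2-1) * ((k+2-2).factorial : ℝ)) := by
            refine mul_le_mul_of_nonneg_right hM1 ?_
            positivity
        _ = M * L^(k+2-1) * ((k+2-2).factorial : ℝ) := by ring
  have h01 := norm_iter_le D hD (u 0) (u 1) M M L hM0 hM0 hL N (hMi 0) (hMi 1)
  have h012 := norm_iter_le D hD (u 0 * u 1) (u 2) (24*(M*M)) M L
    (by positivity) hM0 hL N h01 (hMi 2)
  have hfin := h012 n hnN
  have hprod : (∏ i, u i) = u 0 * u 1 * u 2 := Fin.prod_univ_three u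
  rw [hprod]
  have hM36 : M^3 ≤ M^6 := pow_le_pow_right₀ hM1 (by norm_num)
  have hLn : (0:ℝ) ≤ L^(n-1) := pow_nonneg hL0.le _
  have hfn : (0:ℝ) ≤ ((n-2).factorial : ℝ) := Nat.cast_nonneg _
  calc ‖(⇑D)^[n] (u 0 * u 1 * u 2)‖
      ≤ 24 * ((24*(M*M)) * M) * L^(n-1) * ((n-2).factorial : ℝ) := hfin
    _ = 576 * M^3 * L^(n-1) * ((n-2).factorial : ℝ) := by ring
    _ ≤ 576 * M^6 * L^(n-1) * ((n-2).factorial : ℝ) := by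
        have h0 : (0:ℝ) ≤ L^(n-1) * ((n-2).factorial : ℝ) := mul_nonneg hLn hfn
        nlinarith [mul_le_mul_of_nonneg_right hM36 h0]
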